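/- A polar graph F(θ) = r(θ)(cos θ, sin θ) with r > 0 satisfies the self-similar equation κ = F·ν (with ν = σ^{-1}(−rR + r'N)) if and only if r satisfies the ODE r r'' = r² + 2(r')² + r²(r² + (r')²). -/

import Mathlib

noncomputable section

/-- A polar graph `F(θ) = r(θ)(cos θ, sin θ)` with `r > 0` satisfies the self-similar
equation `κ = F·ν`, i.e. `σ⁻³(2 r'² - r r'' + r²) = -r²/σ` with `σ = √(r² + r'²)`,
if and only if `r` satisfies the ODE `r r'' = r² + 2 r'² + r² (r² + r'²)`. -/
theorem stmt4 (r : ℝ → ℝ) (hr : ContDiff ℝ 2 r) (hpos : ∀ θ : ℝ, 0 < r θ)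
    (σ : ℝ → ℝ) (hσ : σ = fun θ => Real.sqrt ((r θ)^2 + (deriv r θ)^2)) :
    (∀ θ : ℝ, ((σ θ)^3)⁻¹ * (2 * (deriv r θ)^2 - r θ * deriv (deriv r) θ + (r θ)^2)
        = -(r θ)^2 / σ θ)
      ↔ (∀ θ : ℝ, r θ * deriv (deriv r) θ
        = (r θ)^2 + 2 * (deriv r θ)^2 + (r θ)^2 * ((r θ)^2 + (deriv r θ)^2)) := by
  have key : ∀ θ : ℝ, 0 < σ θ ∧ (σ θ)^2 = (r θ)^2 + (deriv r θ)^2 := by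
    intro θ
    have hnn : (0:ℝ) < (r θ)^2 + (deriv r θ)^2 := by
      have := hpos θ; positivity
    constructor
    · rw [hσ]; exact Real.sqrt_pos.mpr hnn
    · rw [hσ]; exact Real.sq_sqrt hnn.le
  constructor
  · intro h θ
    obtain ⟨hσpos, hσsq⟩ := key θ
    have h1 := h θ
    have hne : σ θ ≠ 0 := ne_of_gt hσpos
    field_simp at h1
    have h2 : 2 * (deriv r θ)^2 - r θ * deriv (deriv r) θ + (r θ)^2
        = -((r θ)^2 * (σ θ)^2) := by linarith [h1]
    rw [hσsq] at h2
    nlinarith [h2]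
  · intro h θ
    obtain ⟨hσpos, hσsq⟩ := key θ
    have h1 := h θ
    have hne : σ θ ≠ 0 := ne_of_gt hσpos
    field_simp
    have h2 : 2 * (deriv r θ)^2 - r θ * deriv (deriv r) θ + (r θ)^2
        = -((r θ)^2 * (σ θ)^2) := by rw [hσsq]; linarith
    linarith [h2]
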